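/- Let 0 < l_1, 0 < l_2, l_1 + l_2 < 1, and let (X_{1,a}, X_{2,a}) be the first two coordinates of a Dirichlet D(a l_1, a l_2, a(1-l_1-l_2)) random vector. Then the joint density of (√a(X_{1,a}-l_1), √a(X_{2,a}-l_2)) converges pointwise as a → ∞ to the bivariate normal density with mean zero and covariance matrix Σ = [[l_1(1-l_1), -l_1 l_2], [-l_1 l_2, l_2(1-l_2)]]. -/

import Mathlib

open MeasureTheory Filter Matrix

/-- The density of the Dirichlet distribution `D(a₁, a₂, a₃)` in the first two coordinates. -/
noncomputable def dirichletPDF2 (a₁ a₂ a₃ : ℝ) (x₁ x₂ : ℝ) : ℝ :=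
  if 0 ≤ x₁ ∧ 0 ≤ x₂ ∧ x₁ + x₂ ≤ 1 then
    Real.Gamma (a₁ + a₂ + a₃) / (Real.Gamma a₁ * Real.Gamma a₂ * Real.Gamma a₃) *
      x₁ ^ (a₁ - 1) * x₂ ^ (a₂ - 1) * (1 - x₁ - x₂) ^ (a₃ - 1)
  else 0


open Topology

section AuxStirling
open Filter Real Topology

noncomputable def Efun (x : ℝ) : ℝ := Real.log (Real.Gamma x) - ((x - 1/2) * Real.log x - x)

lemma Efun_nat_tendsto :
    Tendsto (fun n : ℕ => Efun ((n : ℝ) + 1)) atTop (𝓝 (Real.log (2 * Real.pi) / 2)) := by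
  have hform : ∀ n : ℕ, 1 ≤ n → Efun ((n : ℝ) + 1) =
      Real.log (Stirling.stirlingSeq n) + Real.log 2 / 2 + 1
        - ((n : ℝ) + 1/2) * Real.log (1 + 1 / (n : ℝ)) := by
    intro n hn
    have hn0 : (0:ℝ) < n := by exact_mod_cast hn
    have hlog1 : Real.log ((n : ℝ) + 1) = Real.log n + Real.log (1 + 1 / (n : ℝ)) := by
      rw [← Real.log_mul (ne_of_gt hn0) (by positivity)]
      congr 1
      field_simp
    have hfact : Real.log (n.factorial : ℝ) =
        Real.log (Stirling.stirlingSeq n) + 1/2 * Real.log 2 + 1/2 * Real.log n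
          + n * Real.log n - n := by
      have := Stirling.log_stirlingSeq_formula n
      rw [Real.log_mul (by norm_num) (ne_of_gt hn0),
        Real.log_div (ne_of_gt hn0) (by positivity), Real.log_exp] at this
      linarith [this]
    have hg : Real.Gamma ((n : ℝ) + 1) = (n.factorial : ℝ) := by exact_mod_cast Real.Gamma_nat_eq_factorial n
    simp only [Efun, hg, hfact, hlog1]
    ring
  have ha : Tendsto (fun n : ℕ => (n : ℝ) * Real.log (1 + 1 / (n : ℝ))) atTop (𝓝 1) :=
    (Real.tendsto_mul_log_one_add_div_atTop 1).comp tendsto_natCast_atTop_atTop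
  have hb : Tendsto (fun n : ℕ => Real.log (1 + 1 / (n : ℝ))) atTop (𝓝 0) := by
    have : Tendsto (fun n : ℕ => 1 + 1 / (n : ℝ)) atTop (𝓝 1) := by
      simpa using (tendsto_const_nhds : Tendsto (fun _ : ℕ => (1:ℝ)) atTop (𝓝 1)).add tendsto_one_div_atTop_nhds_zero_nat
    simpa [Function.comp_def] using (Real.continuousAt_log one_ne_zero).tendsto.comp this
  have h1 : Tendsto (fun n : ℕ => Real.log (Stirling.stirlingSeq n)) atTop
      (𝓝 (Real.log (Real.sqrt Real.pi))) :=
    ((Real.continuousAt_log (ne_of_gt (Real.sqrt_pos.mpr Real.pi_pos))).tendsto).comp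
      Stirling.tendsto_stirlingSeq_sqrt_pi
  have hmain : Tendsto (fun n : ℕ => Real.log (Stirling.stirlingSeq n) + Real.log 2 / 2 + 1
      - ((n : ℝ) + 1/2) * Real.log (1 + 1 / (n : ℝ))) atTop
      (𝓝 (Real.log (Real.sqrt Real.pi) + Real.log 2 / 2 + 1 - 1)) := by
    have h2 : Tendsto (fun n : ℕ => ((n : ℝ) + 1/2) * Real.log (1 + 1 / (n : ℝ))) atTop (𝓝 1) := by
      have := ha.add (hb.const_mul (1/2 : ℝ))
      simp only [mul_zero, add_zero] at this
      refine this.congr (fun n => by ring) |>.mono_right ?_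
      simp
    exact ((h1.add_const _).add_const _).sub h2
  have hval : Real.log (Real.sqrt Real.pi) + Real.log 2 / 2 + 1 - 1 = Real.log (2 * Real.pi) / 2 := by
    rw [Real.log_sqrt Real.pi_pos.le, Real.log_mul two_ne_zero (ne_of_gt Real.pi_pos)]
    ring
  rw [← hval]
  refine hmain.congr' ?_
  filter_upwards [eventually_ge_atTop 1] with n hn
  exact (hform n hn).symm

-- lower bound : for x ≥ 2, Efun (⌊x⌋+1) - 1/(2*⌊x⌋) ≤ Efun x
lemma Efun_lower {x : ℝ} (hx : 2 ≤ x) :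
    Efun ((⌊x⌋₊ : ℝ) + 1) - 1 / (2 * (⌊x⌋₊ : ℝ)) ≤ Efun x := by
  set n : ℕ := ⌊x⌋₊ with hn
  have hx0 : (0:ℝ) < x := by linarith
  have hn2 : 2 ≤ n := Nat.le_floor (by exact_mod_cast hx)
  have hn0 : (0:ℝ) < n := by exact_mod_cast Nat.lt_of_lt_of_le Nat.zero_lt_two hn2
  have hnx : (n : ℝ) ≤ x := Nat.floor_le hx0.le
  have hxn : x < (n : ℝ) + 1 := Nat.lt_floor_add_one x
  have hΓx : 0 < Real.Gamma x := Real.Gamma_pos_of_pos hx0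
  have hΓx1 : 0 < Real.Gamma (x + 1) := Real.Gamma_pos_of_pos (by linarith)
  -- convexity : logΓ(n+1) ≤ (x-n) logΓ x + (n+1-x) logΓ (x+1)
  have hcv := Real.convexOn_log_Gamma.2 (Set.mem_Ioi.mpr hx0) (Set.mem_Ioi.mpr (show (0:ℝ) < x + 1 by linarith))
    (by linarith : (0:ℝ) ≤ x - (n:ℝ) + 1 - 1 + 1 - 1) (by linarith : (0:ℝ) ≤ (n:ℝ) + 1 - x)
    (by ring : (x - (n:ℝ) + 1 - 1 + 1 - 1) + ((n:ℝ) + 1 - x) = 1)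
  simp only [smul_eq_mul, Function.comp_apply] at hcv
  rw [show (x - (n:ℝ) + 1 - 1 + 1 - 1) * x + ((n:ℝ) + 1 - x) * (x + 1) = (n:ℝ) + 1 by ring] at hcv
  have hΓrec : Real.log (Real.Gamma (x + 1)) = Real.log (Real.Gamma x) + Real.log x := by
    rw [Real.Gamma_add_one (ne_of_gt hx0), Real.log_mul (ne_of_gt hx0) (ne_of_gt hΓx)]
    ring
  rw [hΓrec] at hcv
  -- hcv : logΓ(n+1) ≤ logΓ x + (n+1-x) * log x   (after algebra)
  have h2 : Real.log x - Real.log ((n:ℝ) + 1) ≤ (x - (n:ℝ) - 1) / ((n:ℝ) + 1) := by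
    have h := Real.log_le_sub_one_of_pos (show 0 < x / ((n:ℝ)+1) by positivity)
    rw [Real.log_div (ne_of_gt hx0) (by positivity)] at h
    have : x / ((n:ℝ)+1) - 1 = (x - (n:ℝ) - 1) / ((n:ℝ)+1) := by field_simp; ring
    linarith [this ▸ h]
  -- assemble
  simp only [Efun]
  have key : ((n:ℝ) + 1/2) * (Real.log ((n:ℝ)+1) - Real.log x) + (x - (n:ℝ) - 1) ≥ -(1/(2*(n:ℝ))) := by
    have hA : Real.log ((n:ℝ)+1) - Real.log x ≥ ((n:ℝ) + 1 - x) / ((n:ℝ)+1) := by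
      have : (x - (n:ℝ) - 1) / ((n:ℝ)+1) = -(((n:ℝ)+1-x) / ((n:ℝ)+1)) := by field_simp; ring
      linarith [this ▸ h2]
    have hcoef : (0:ℝ) ≤ (n:ℝ) + 1/2 := by linarith
    have := mul_le_mul_of_nonneg_left hA hcoef
    have hfin : ((n:ℝ) + 1/2) * (((n:ℝ)+1-x) / ((n:ℝ)+1)) + (x - (n:ℝ) - 1) ≥ -(1/(2*(n:ℝ))) := by
      rw [ge_iff_le, ← sub_nonneg]
      have expand : ((n:ℝ) + 1/2) * (((n:ℝ)+1-x) / ((n:ℝ)+1)) + (x - (n:ℝ) - 1) - -(1/(2*(n:ℝ)))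
          = ((n:ℝ) + 1 - ((n:ℝ)+1-x) * (n:ℝ)) / (2*(n:ℝ)*((n:ℝ)+1)) := by
        field_simp
        ring
      rw [expand]
      apply div_nonneg _ (by positivity)
      nlinarith [hxn, hnx, hn0]
    linarith
  nlinarith [key, hcv]

lemma Efun_upper {x : ℝ} (hx : 2 ≤ x) :
    Efun x ≤ max (Efun (⌊x⌋₊ : ℝ)) (Efun ((⌊x⌋₊ : ℝ) + 1)) + 1 / (⌊x⌋₊ : ℝ) := by
  set n : ℕ := ⌊x⌋₊ with hn
  have hx0 : (0:ℝ) < x := by linarith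
  have hn2 : 2 ≤ n := Nat.le_floor (by exact_mod_cast hx)
  have hn0 : (0:ℝ) < n := by exact_mod_cast Nat.lt_of_lt_of_le Nat.zero_lt_two hn2
  have hnx : (n : ℝ) ≤ x := Nat.floor_le hx0.le
  have hxn : x < (n : ℝ) + 1 := Nat.lt_floor_add_one x
  have h1 := Real.convexOn_log_Gamma.2 (Set.mem_Ioi.mpr hn0)
    (Set.mem_Ioi.mpr (show (0:ℝ) < (n:ℝ) + 1 by linarith))
    (by linarith : (0:ℝ) ≤ (n:ℝ) + 1 - x) (by linarith : (0:ℝ) ≤ x - (n:ℝ))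
    (by ring : ((n:ℝ) + 1 - x) + (x - (n:ℝ)) = 1)
  simp only [smul_eq_mul, Function.comp_apply] at h1
  rw [show ((n:ℝ) + 1 - x) * (n:ℝ) + (x - (n:ℝ)) * ((n:ℝ) + 1) = x by ring] at h1
  have h2 := (strictConcaveOn_log_Ioi.concaveOn).2 (Set.mem_Ioi.mpr hn0)
    (Set.mem_Ioi.mpr (show (0:ℝ) < (n:ℝ) + 1 by linarith))
    (by linarith : (0:ℝ) ≤ (n:ℝ) + 1 - x) (by linarith : (0:ℝ) ≤ x - (n:ℝ))
    (by ring : ((n:ℝ) + 1 - x) + (x - (n:ℝ)) = 1)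
  simp only [smul_eq_mul] at h2
  rw [show ((n:ℝ) + 1 - x) * (n:ℝ) + (x - (n:ℝ)) * ((n:ℝ) + 1) = x by ring] at h2
  have h3 : (x - 1/2) * (((n:ℝ) + 1 - x) * Real.log n + (x - (n:ℝ)) * Real.log ((n:ℝ)+1))
      ≤ (x - 1/2) * Real.log x := mul_le_mul_of_nonneg_left h2 (by linarith)
  have h4 : Real.log ((n:ℝ)+1) - Real.log (n:ℝ) ≤ 1 / (n:ℝ) := by
    have h := Real.log_le_sub_one_of_pos (show 0 < ((n:ℝ)+1) / (n:ℝ) by positivity)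
    rw [Real.log_div (by positivity) (ne_of_gt hn0)] at h
    have : ((n:ℝ)+1) / (n:ℝ) - 1 = 1 / (n:ℝ) := by field_simp; ring
    linarith [this ▸ h]
  have h5 : Real.log (n:ℝ) ≤ Real.log ((n:ℝ)+1) :=
    Real.log_le_log (by positivity) (by linarith)
  have hkey : ((n:ℝ)+1-x) * (((n:ℝ)-1/2) * Real.log n - (n:ℝ))
      + (x-(n:ℝ)) * (((n:ℝ)+1/2) * Real.log ((n:ℝ)+1) - ((n:ℝ)+1))
      - (x-1/2) * (((n:ℝ)+1-x) * Real.log n + (x-(n:ℝ)) * Real.log ((n:ℝ)+1)) + x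
      = (x-(n:ℝ)) * ((n:ℝ)+1-x) * (Real.log ((n:ℝ)+1) - Real.log n) := by ring
  have hbd : (x-(n:ℝ)) * ((n:ℝ)+1-x) * (Real.log ((n:ℝ)+1) - Real.log n) ≤ 1 / (n:ℝ) := by
    have hw : (x-(n:ℝ)) * ((n:ℝ)+1-x) ≤ 1 := by nlinarith
    have hw0 : 0 ≤ (x-(n:ℝ)) * ((n:ℝ)+1-x) := mul_nonneg (by linarith) (by linarith)
    calc (x-(n:ℝ)) * ((n:ℝ)+1-x) * (Real.log ((n:ℝ)+1) - Real.log n)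
        ≤ 1 * (Real.log ((n:ℝ)+1) - Real.log n) :=
          mul_le_mul_of_nonneg_right hw (by linarith)
      _ ≤ 1 / (n:ℝ) := by linarith
  have hmax : ((n:ℝ)+1-x) * Efun (n:ℝ) + (x-(n:ℝ)) * Efun ((n:ℝ)+1)
      ≤ max (Efun (n:ℝ)) (Efun ((n:ℝ)+1)) := by
    nlinarith [mul_nonneg (by linarith : (0:ℝ) ≤ (n:ℝ)+1-x)
        (sub_nonneg.2 (le_max_left (Efun (n:ℝ)) (Efun ((n:ℝ)+1)))),
      mul_nonneg (by linarith : (0:ℝ) ≤ x-(n:ℝ))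
        (sub_nonneg.2 (le_max_right (Efun (n:ℝ)) (Efun ((n:ℝ)+1))))]
  simp only [Efun] at hmax ⊢
  nlinarith [h1, h3, hkey, hbd, hmax]

lemma Efun_tendsto : Tendsto Efun atTop (𝓝 (Real.log (2 * Real.pi) / 2)) := by
  have hfloor : Tendsto (fun x : ℝ => ⌊x⌋₊) atTop atTop := tendsto_nat_floor_atTop
  have hE0 : Tendsto (fun n : ℕ => Efun (n : ℝ)) atTop (𝓝 (Real.log (2 * Real.pi) / 2)) := by
    rw [← tendsto_add_atTop_iff_nat 1]
    exact Efun_nat_tendsto.congr (fun n => by push_cast; ring_nf)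
  have hinv : Tendsto (fun n : ℕ => 1 / (n : ℝ)) atTop (𝓝 0) :=
    tendsto_one_div_atTop_nhds_zero_nat
  have hlow : Tendsto (fun x : ℝ => Efun ((⌊x⌋₊ : ℝ) + 1) - 1 / (2 * (⌊x⌋₊ : ℝ)))
      atTop (𝓝 (Real.log (2 * Real.pi) / 2)) := by
    have hseq : Tendsto (fun n : ℕ => Efun ((n : ℝ) + 1) - 1 / (2 * (n : ℝ))) atTop
        (𝓝 (Real.log (2 * Real.pi) / 2)) := by
      have h2 : Tendsto (fun n : ℕ => 1 / (2 * (n : ℝ))) atTop (𝓝 0) := by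
        simpa using hinv.const_mul (1/2 : ℝ) |>.congr (fun n => by ring)
      simpa using Efun_nat_tendsto.sub h2
    exact hseq.comp hfloor
  have hup : Tendsto (fun x : ℝ => max (Efun (⌊x⌋₊ : ℝ)) (Efun ((⌊x⌋₊ : ℝ) + 1)) + 1 / (⌊x⌋₊ : ℝ))
      atTop (𝓝 (Real.log (2 * Real.pi) / 2)) := by
    have hseq : Tendsto (fun n : ℕ => max (Efun (n : ℝ)) (Efun ((n : ℝ) + 1)) + 1 / (n : ℝ)) atTop
        (𝓝 (Real.log (2 * Real.pi) / 2)) := by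
      have := (hE0.max Efun_nat_tendsto).add hinv
      simpa using this
    exact hseq.comp hfloor
  refine tendsto_of_tendsto_of_tendsto_of_le_of_le' hlow hup ?_ ?_
  · filter_upwards [eventually_ge_atTop (2:ℝ)] with x hx using Efun_lower hx
  · filter_upwards [eventually_ge_atTop (2:ℝ)] with x hx using Efun_upper hx

lemma sqrtTendstoAtTop : Tendsto Real.sqrt atTop atTop := by
  refine tendsto_atTop_atTop.2 (fun b => ⟨(max b 0)^2, fun a ha => ?_⟩)
  calc b ≤ max b 0 := le_max_left _ _
    _ = Real.sqrt ((max b 0)^2) := (Real.sqrt_sq (le_max_right _ _)).symm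
    _ ≤ Real.sqrt a := Real.sqrt_le_sqrt ha

lemma log_quad (k : ℝ) :
    Tendsto (fun a : ℝ => a * (Real.log (1 + k / Real.sqrt a) - k / Real.sqrt a)) atTop
      (𝓝 (-(k ^ 2) / 2)) := by
  have hb : Tendsto (fun a : ℝ => 2 * |k| ^ 3 / Real.sqrt a) atTop (𝓝 0) :=
    Tendsto.div_atTop tendsto_const_nhds sqrtTendstoAtTop
  have hkey : ∀ᶠ a : ℝ in atTop,
      |a * (Real.log (1 + k / Real.sqrt a) - k / Real.sqrt a) - (-(k ^ 2) / 2)|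
        ≤ 2 * |k| ^ 3 / Real.sqrt a := by
    filter_upwards [eventually_ge_atTop (1:ℝ), eventually_gt_atTop ((2 * |k| + 1)^2)] with a ha1 hak
    have ha0 : (0:ℝ) < a := by nlinarith [sq_nonneg (2 * |k|), abs_nonneg k]
    have hs0 : 0 < Real.sqrt a := Real.sqrt_pos.mpr ha0
    have hs1 : 2 * |k| + 1 ≤ Real.sqrt a := by
      have := Real.sqrt_le_sqrt hak.le
      rwa [Real.sqrt_sq (by positivity)] at this
    set u : ℝ := k / Real.sqrt a with hu
    have husmall : |u| ≤ 1 / 2 := by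
      rw [hu, abs_div, abs_of_pos hs0, div_le_iff₀ hs0]
      nlinarith [abs_nonneg k]
    have h1u : |(-u)| < 1 := by rw [abs_neg]; linarith [abs_nonneg u]
    have habs := Real.abs_log_sub_add_sum_range_le h1u 2
    have hsum : (∑ i ∈ Finset.range 2, (-u) ^ (i + 1) / ((i:ℝ) + 1)) = -u + u^2/2 := by
      simp [Finset.sum_range_succ]
      ring
    rw [hsum, sub_neg_eq_add, abs_neg] at habs
    -- habs : |(-u + u^2/2) + log (1 + u)| ≤ |u|^3 / (1 - |u|)
    have hden : (1:ℝ)/2 ≤ 1 - |u| := by linarith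
    have habs2 : |Real.log (1 + u) - u + u ^ 2 / 2| ≤ 2 * |u| ^ 3 := by
      have h2 : |u| ^ 3 / (1 - |u|) ≤ |u| ^ 3 / (1/2) :=
        div_le_div_of_nonneg_left (by positivity) (by norm_num) hden
      calc |Real.log (1 + u) - u + u ^ 2 / 2| = |(-u + u^2/2) + Real.log (1 + u)| := by
            congr 1; ring
        _ ≤ |u| ^ 3 / (1 - |u|) := habs
        _ ≤ 2 * |u| ^ 3 := by
            have : |u| ^ 3 / (1/2) = 2 * |u| ^ 3 := by ring
            linarith [this ▸ h2]
    have hmul := mul_le_mul_of_nonneg_left habs2 ha0.le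
    rw [show a * |Real.log (1 + u) - u + u ^ 2 / 2| = |a| * |Real.log (1 + u) - u + u ^ 2 / 2| by
      rw [abs_of_pos ha0], ← abs_mul] at hmul
    have hsq : Real.sqrt a ^ 2 = a := Real.sq_sqrt ha0.le
    have e1 : a * (Real.log (1 + u) - u + u ^ 2 / 2)
        = a * (Real.log (1 + u) - u) - (-(k ^ 2) / 2) := by
      have h3 : a * (u ^ 2 / 2) = k ^ 2 / 2 := by
        rw [hu, div_pow, hsq]
        field_simp
      nlinarith [h3]
    have e2 : a * (2 * |u| ^ 3) = 2 * |k| ^ 3 / Real.sqrt a := by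
      have hcube : Real.sqrt a ^ 3 = a * Real.sqrt a := by
        rw [pow_succ, hsq]
      rw [hu, abs_div, abs_of_pos hs0, div_pow, hcube]
      field_simp
    rw [e1, e2] at hmul
    exact hmul
  have hlow : Tendsto (fun a : ℝ => -(k ^ 2) / 2 - 2 * |k| ^ 3 / Real.sqrt a) atTop
      (𝓝 (-(k ^ 2) / 2)) := by simpa using tendsto_const_nhds.sub hb
  have hup : Tendsto (fun a : ℝ => -(k ^ 2) / 2 + 2 * |k| ^ 3 / Real.sqrt a) atTop
      (𝓝 (-(k ^ 2) / 2)) := by simpa using tendsto_const_nhds.add hb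
  refine tendsto_of_tendsto_of_tendsto_of_le_of_le' hlow hup ?_ ?_
  · filter_upwards [hkey] with a h
    linarith [(abs_le.mp h).1]
  · filter_upwards [hkey] with a h
    linarith [(abs_le.mp h).2]

lemma coord_limit (l k : ℝ) (hl : 0 < l) :
    Tendsto (fun a : ℝ => (a * l - 1) * Real.log (l + k / Real.sqrt a)
      - a * l * Real.log l - Real.sqrt a * k) atTop
      (𝓝 (-(k ^ 2) / (2 * l) - Real.log l)) := by
  have htz : Tendsto (fun a : ℝ => (k / l) / Real.sqrt a) atTop (𝓝 0) :=
    Tendsto.div_atTop tendsto_const_nhds sqrtTendstoAtTop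
  have hlog0 : Tendsto (fun a : ℝ => Real.log (1 + (k / l) / Real.sqrt a)) atTop (𝓝 0) := by
    have h1 : Tendsto (fun a : ℝ => 1 + (k / l) / Real.sqrt a) atTop (𝓝 1) := by
      simpa using tendsto_const_nhds.add htz
    simpa [Function.comp_def] using (Real.continuousAt_log one_ne_zero).tendsto.comp h1
  have hmain : Tendsto (fun a : ℝ =>
      l * (a * (Real.log (1 + (k / l) / Real.sqrt a) - (k / l) / Real.sqrt a))
        - Real.log l - Real.log (1 + (k / l) / Real.sqrt a)) atTop
      (𝓝 (l * (-((k / l) ^ 2) / 2) - Real.log l - 0)) :=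
    (((log_quad (k / l)).const_mul l).sub_const _).sub hlog0
  have hval : l * (-((k / l) ^ 2) / 2) - Real.log l - 0 = -(k ^ 2) / (2 * l) - Real.log l := by
    field_simp
    ring
  rw [hval] at hmain
  refine hmain.congr' ?_
  filter_upwards [eventually_ge_atTop (1:ℝ),
    eventually_gt_atTop ((|k| / l + 1) ^ 2)] with a ha1 hak
  have ha0 : (0:ℝ) < a := by nlinarith [abs_nonneg k, sq_nonneg (|k|/l + 1)]
  have hs0 : 0 < Real.sqrt a := Real.sqrt_pos.mpr ha0
  have hs1 : |k| / l + 1 ≤ Real.sqrt a := by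
    have h := Real.sqrt_le_sqrt hak.le
    rwa [Real.sqrt_sq (by positivity)] at h
  set t : ℝ := (k / l) / Real.sqrt a with ht
  have htabs : |t| < 1 := by
    rw [ht, abs_div, abs_div, abs_of_pos hl, abs_of_pos hs0, div_div]
    rw [div_lt_one (by positivity)]
    have hh : l * (|k| / l + 1) = |k| + l := by field_simp
    nlinarith [mul_le_mul_of_nonneg_left hs1 hl.le]
  have ht1 : 0 < 1 + t := by
    rcases abs_lt.mp htabs with ⟨h1, _⟩
    linarith
  have hxpos : l + k / Real.sqrt a = l * (1 + t) := by
    rw [ht]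
    field_simp
  have hlogsplit : Real.log (l + k / Real.sqrt a) = Real.log l + Real.log (1 + t) := by
    rw [hxpos, Real.log_mul (ne_of_gt hl) (ne_of_gt ht1)]
  have hat : a * l * t = Real.sqrt a * k := by
    have hss : Real.sqrt a * Real.sqrt a = a := Real.mul_self_sqrt ha0.le
    have h2 : a * l * (k / l / Real.sqrt a) = (a / Real.sqrt a) * k := by
      field_simp
    rw [ht, h2, Real.div_sqrt]
  rw [hlogsplit]
  linear_combination -hat

end AuxStirling

/-- The joint density of `(√a(X₁ₐ - l₁), √a(X₂ₐ - l₂))`, where `(X₁ₐ, X₂ₐ)` are the first two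
coordinates of a `D(al₁, al₂, a(1-l₁-l₂))` vector, converges pointwise to the bivariate normal
density with mean zero and covariance `Σ = [[l₁(1-l₁), -l₁l₂], [-l₁l₂, l₂(1-l₂)]]`. -/
theorem dirichlet_scaled_density_tendsto_bivariate_gaussian (l₁ l₂ : ℝ)
    (hl₁ : 0 < l₁) (hl₂ : 0 < l₂) (hl : l₁ + l₂ < 1) (y₁ y₂ : ℝ) :
    Tendsto (fun a : ℝ =>
        (1 / a) * dirichletPDF2 (a * l₁) (a * l₂) (a * (1 - l₁ - l₂))
          (y₁ / Real.sqrt a + l₁) (y₂ / Real.sqrt a + l₂))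
      atTop
      (nhds
        ((1 / (2 * Real.pi *
            Real.sqrt (!![l₁ * (1 - l₁), -(l₁ * l₂);
              -(l₁ * l₂), l₂ * (1 - l₂)] : Matrix (Fin 2) (Fin 2) ℝ).det)) *
          Real.exp (-(![y₁, y₂] ⬝ᵥ
            ((!![l₁ * (1 - l₁), -(l₁ * l₂);
              -(l₁ * l₂), l₂ * (1 - l₂)] : Matrix (Fin 2) (Fin 2) ℝ)⁻¹ *ᵥ ![y₁, y₂])) / 2))) := by
  have hl₃ : 0 < 1 - l₁ - l₂ := by linarith
  -- determinant
  have hdet : (!![l₁ * (1 - l₁), -(l₁ * l₂);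
      -(l₁ * l₂), l₂ * (1 - l₂)] : Matrix (Fin 2) (Fin 2) ℝ).det
      = l₁ * l₂ * (1 - l₁ - l₂) := by
    rw [Matrix.det_fin_two_of]; ring
  -- quadratic form
  have hQ : (![y₁, y₂] ⬝ᵥ ((!![l₁ * (1 - l₁), -(l₁ * l₂);
      -(l₁ * l₂), l₂ * (1 - l₂)] : Matrix (Fin 2) (Fin 2) ℝ)⁻¹ *ᵥ ![y₁, y₂]))
      = y₁ ^ 2 / l₁ + y₂ ^ 2 / l₂ + (y₁ + y₂) ^ 2 / (1 - l₁ - l₂) := by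
    rw [Matrix.inv_def, Matrix.adjugate_fin_two_of, Ring.inverse_eq_inv', hdet]
    simp [Matrix.mulVec, dotProduct, Fin.sum_univ_two]
    field_simp
    ring
  -- the log of the scaled density
  have hm₁ : Tendsto (fun a : ℝ => a * l₁) atTop atTop := Tendsto.atTop_mul_const hl₁ tendsto_id
  have hm₂ : Tendsto (fun a : ℝ => a * l₂) atTop atTop := Tendsto.atTop_mul_const hl₂ tendsto_id
  have hm₃ : Tendsto (fun a : ℝ => a * (1 - l₁ - l₂)) atTop atTop :=
    Tendsto.atTop_mul_const hl₃ tendsto_id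
  have hE : Tendsto (fun a : ℝ => Efun a - Efun (a * l₁) - Efun (a * l₂)
      - Efun (a * (1 - l₁ - l₂))) atTop
      (𝓝 (Real.log (2 * Real.pi) / 2 - Real.log (2 * Real.pi) / 2
        - Real.log (2 * Real.pi) / 2 - Real.log (2 * Real.pi) / 2)) :=
    ((Efun_tendsto.sub (Efun_tendsto.comp hm₁)).sub (Efun_tendsto.comp hm₂)).sub
      (Efun_tendsto.comp hm₃)
  have hV := ((coord_limit l₁ y₁ hl₁).add (coord_limit l₂ y₂ hl₂)).add
    (coord_limit (1 - l₁ - l₂) (-(y₁ + y₂)) hl₃)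
  have hdecomp : Tendsto (fun a : ℝ =>
      (Efun a - Efun (a * l₁) - Efun (a * l₂) - Efun (a * (1 - l₁ - l₂)))
      + (Real.log l₁ + Real.log l₂ + Real.log (1 - l₁ - l₂)) / 2
      + (((a * l₁ - 1) * Real.log (l₁ + y₁ / Real.sqrt a) - a * l₁ * Real.log l₁
            - Real.sqrt a * y₁
          + ((a * l₂ - 1) * Real.log (l₂ + y₂ / Real.sqrt a) - a * l₂ * Real.log l₂
            - Real.sqrt a * y₂))
        + ((a * (1 - l₁ - l₂) - 1) * Real.log ((1 - l₁ - l₂) + -(y₁ + y₂) / Real.sqrt a)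
            - a * (1 - l₁ - l₂) * Real.log (1 - l₁ - l₂) - Real.sqrt a * -(y₁ + y₂)))) atTop
      (𝓝 ((Real.log (2 * Real.pi) / 2 - Real.log (2 * Real.pi) / 2
          - Real.log (2 * Real.pi) / 2 - Real.log (2 * Real.pi) / 2)
        + (Real.log l₁ + Real.log l₂ + Real.log (1 - l₁ - l₂)) / 2
        + ((-(y₁ ^ 2) / (2 * l₁) - Real.log l₁ + (-(y₂ ^ 2) / (2 * l₂) - Real.log l₂))
          + (-((-(y₁ + y₂)) ^ 2) / (2 * (1 - l₁ - l₂)) - Real.log (1 - l₁ - l₂))))) :=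
    (hE.add_const _).add hV
  set g : ℝ → ℝ := fun a =>
    -Real.log a + Real.log (Real.Gamma a)
      - Real.log (Real.Gamma (a * l₁)) - Real.log (Real.Gamma (a * l₂))
      - Real.log (Real.Gamma (a * (1 - l₁ - l₂)))
      + (a * l₁ - 1) * Real.log (l₁ + y₁ / Real.sqrt a)
      + (a * l₂ - 1) * Real.log (l₂ + y₂ / Real.sqrt a)
      + (a * (1 - l₁ - l₂) - 1) * Real.log ((1 - l₁ - l₂) + -(y₁ + y₂) / Real.sqrt a)
    with hgdef
  have hgcongr : ∀ᶠ a : ℝ in atTop,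
      (Efun a - Efun (a * l₁) - Efun (a * l₂) - Efun (a * (1 - l₁ - l₂)))
      + (Real.log l₁ + Real.log l₂ + Real.log (1 - l₁ - l₂)) / 2
      + (((a * l₁ - 1) * Real.log (l₁ + y₁ / Real.sqrt a) - a * l₁ * Real.log l₁
            - Real.sqrt a * y₁
          + ((a * l₂ - 1) * Real.log (l₂ + y₂ / Real.sqrt a) - a * l₂ * Real.log l₂
            - Real.sqrt a * y₂))
        + ((a * (1 - l₁ - l₂) - 1) * Real.log ((1 - l₁ - l₂) + -(y₁ + y₂) / Real.sqrt a)
            - a * (1 - l₁ - l₂) * Real.log (1 - l₁ - l₂) - Real.sqrt a * -(y₁ + y₂))) = g a := by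
    filter_upwards [eventually_gt_atTop (0:ℝ)] with a ha0
    rw [hgdef]
    simp only [Efun]
    rw [Real.log_mul (ne_of_gt ha0) (ne_of_gt hl₁),
      Real.log_mul (ne_of_gt ha0) (ne_of_gt hl₂),
      Real.log_mul (ne_of_gt ha0) (ne_of_gt hl₃)]
    ring
  have hg : Tendsto g atTop
      (𝓝 ((Real.log (2 * Real.pi) / 2 - Real.log (2 * Real.pi) / 2
          - Real.log (2 * Real.pi) / 2 - Real.log (2 * Real.pi) / 2)
        + (Real.log l₁ + Real.log l₂ + Real.log (1 - l₁ - l₂)) / 2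
        + ((-(y₁ ^ 2) / (2 * l₁) - Real.log l₁ + (-(y₂ ^ 2) / (2 * l₂) - Real.log l₂))
          + (-((-(y₁ + y₂)) ^ 2) / (2 * (1 - l₁ - l₂)) - Real.log (1 - l₁ - l₂))))) :=
    hdecomp.congr' hgcongr
  -- eventual equality with the density
  have ht₁ : Tendsto (fun a : ℝ => y₁ / Real.sqrt a) atTop (𝓝 0) :=
    Tendsto.div_atTop tendsto_const_nhds sqrtTendstoAtTop
  have ht₂ : Tendsto (fun a : ℝ => y₂ / Real.sqrt a) atTop (𝓝 0) :=
    Tendsto.div_atTop tendsto_const_nhds sqrtTendstoAtTop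
  have ht₃ : Tendsto (fun a : ℝ => (y₁ + y₂) / Real.sqrt a) atTop (𝓝 0) :=
    Tendsto.div_atTop tendsto_const_nhds sqrtTendstoAtTop
  have hmain : ∀ᶠ a : ℝ in atTop, Real.exp (g a) =
      (1 / a) * dirichletPDF2 (a * l₁) (a * l₂) (a * (1 - l₁ - l₂))
        (y₁ / Real.sqrt a + l₁) (y₂ / Real.sqrt a + l₂) := by
    filter_upwards [eventually_gt_atTop (0:ℝ),
      ht₁ (Ioi_mem_nhds (show -l₁ < 0 by linarith)),
      ht₂ (Ioi_mem_nhds (show -l₂ < 0 by linarith)),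
      ht₃ (Iio_mem_nhds hl₃)] with a ha0 h1 h2 h3
    have hs0 : 0 < Real.sqrt a := Real.sqrt_pos.mpr ha0
    simp only [Set.mem_preimage, Set.mem_Ioi] at h1 h2
    simp only [Set.mem_preimage, Set.mem_Iio] at h3
    have hx₁ : 0 < y₁ / Real.sqrt a + l₁ := by linarith
    have hx₂ : 0 < y₂ / Real.sqrt a + l₂ := by linarith
    have hsplit : (y₁ + y₂) / Real.sqrt a = y₁ / Real.sqrt a + y₂ / Real.sqrt a := add_div _ _ _
    have hx₃ : 0 < (1 - l₁ - l₂) + -(y₁ + y₂) / Real.sqrt a := by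
      have hne : -(y₁ + y₂) / Real.sqrt a = -((y₁ + y₂) / Real.sqrt a) := by ring
      rw [hne]; linarith
    have hsum : (y₁ / Real.sqrt a + l₁) + (y₂ / Real.sqrt a + l₂) ≤ 1 := by
      rw [hsplit] at h3
      linarith
    have hΓa : 0 < Real.Gamma a := Real.Gamma_pos_of_pos ha0
    have hΓ₁ : 0 < Real.Gamma (a * l₁) := Real.Gamma_pos_of_pos (by positivity)
    have hΓ₂ : 0 < Real.Gamma (a * l₂) := Real.Gamma_pos_of_pos (by positivity)
    have hΓ₃ : 0 < Real.Gamma (a * (1 - l₁ - l₂)) := Real.Gamma_pos_of_pos (by positivity)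
    simp only [dirichletPDF2]
    rw [if_pos ⟨hx₁.le, hx₂.le, hsum⟩]
    rw [show a * l₁ + a * l₂ + a * (1 - l₁ - l₂) = a by ring]
    rw [show 1 - (y₁ / Real.sqrt a + l₁) - (y₂ / Real.sqrt a + l₂)
        = (1 - l₁ - l₂) + -(y₁ + y₂) / Real.sqrt a by ring]
    have hp₁ : 0 < (y₁ / Real.sqrt a + l₁) ^ (a * l₁ - 1) := Real.rpow_pos_of_pos hx₁ _
    have hp₂ : 0 < (y₂ / Real.sqrt a + l₂) ^ (a * l₂ - 1) := Real.rpow_pos_of_pos hx₂ _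
    have hp₃ : 0 < ((1 - l₁ - l₂) + -(y₁ + y₂) / Real.sqrt a) ^ (a * (1 - l₁ - l₂) - 1) :=
      Real.rpow_pos_of_pos hx₃ _
    have hR : 0 < Real.Gamma a / (Real.Gamma (a * l₁) * Real.Gamma (a * l₂)
        * Real.Gamma (a * (1 - l₁ - l₂))) :=
      div_pos hΓa (mul_pos (mul_pos hΓ₁ hΓ₂) hΓ₃)
    have hRHS : 0 < (1 / a) * (Real.Gamma a / (Real.Gamma (a * l₁) * Real.Gamma (a * l₂)
          * Real.Gamma (a * (1 - l₁ - l₂)))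
        * (y₁ / Real.sqrt a + l₁) ^ (a * l₁ - 1) * (y₂ / Real.sqrt a + l₂) ^ (a * l₂ - 1)
        * ((1 - l₁ - l₂) + -(y₁ + y₂) / Real.sqrt a) ^ (a * (1 - l₁ - l₂) - 1)) := by
      have := mul_pos (mul_pos (mul_pos hR hp₁) hp₂) hp₃
      positivity
    rw [← Real.exp_log hRHS]
    congr 1
    rw [Real.log_mul (by positivity) (by positivity),
      Real.log_mul (by positivity : ((Real.Gamma a / (Real.Gamma (a * l₁) * Real.Gamma (a * l₂)
          * Real.Gamma (a * (1 - l₁ - l₂)))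
        * (y₁ / Real.sqrt a + l₁) ^ (a * l₁ - 1) * (y₂ / Real.sqrt a + l₂) ^ (a * l₂ - 1))) ≠ 0)
        (ne_of_gt hp₃),
      Real.log_mul (by positivity : ((Real.Gamma a / (Real.Gamma (a * l₁) * Real.Gamma (a * l₂)
          * Real.Gamma (a * (1 - l₁ - l₂)))
        * (y₁ / Real.sqrt a + l₁) ^ (a * l₁ - 1))) ≠ 0) (ne_of_gt hp₂),
      Real.log_mul (ne_of_gt hR) (ne_of_gt hp₁),
      Real.log_div (ne_of_gt hΓa) (by positivity),
      Real.log_mul (by positivity : (Real.Gamma (a * l₁) * Real.Gamma (a * l₂)) ≠ 0)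
        (ne_of_gt hΓ₃),
      Real.log_mul (ne_of_gt hΓ₁) (ne_of_gt hΓ₂),
      Real.log_rpow hx₁, Real.log_rpow hx₂, Real.log_rpow hx₃,
      one_div, Real.log_inv]
    simp only [hgdef]
    rw [show l₁ + y₁ / Real.sqrt a = y₁ / Real.sqrt a + l₁ by ring,
      show l₂ + y₂ / Real.sqrt a = y₂ / Real.sqrt a + l₂ by ring]
    ring
  -- value of the limit
  have hval : Real.exp ((Real.log (2 * Real.pi) / 2 - Real.log (2 * Real.pi) / 2
          - Real.log (2 * Real.pi) / 2 - Real.log (2 * Real.pi) / 2)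
        + (Real.log l₁ + Real.log l₂ + Real.log (1 - l₁ - l₂)) / 2
        + ((-(y₁ ^ 2) / (2 * l₁) - Real.log l₁ + (-(y₂ ^ 2) / (2 * l₂) - Real.log l₂))
          + (-((-(y₁ + y₂)) ^ 2) / (2 * (1 - l₁ - l₂)) - Real.log (1 - l₁ - l₂))))
      = (1 / (2 * Real.pi *
            Real.sqrt (!![l₁ * (1 - l₁), -(l₁ * l₂);
              -(l₁ * l₂), l₂ * (1 - l₂)] : Matrix (Fin 2) (Fin 2) ℝ).det)) *
          Real.exp (-(![y₁, y₂] ⬝ᵥ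
            ((!![l₁ * (1 - l₁), -(l₁ * l₂);
              -(l₁ * l₂), l₂ * (1 - l₂)] : Matrix (Fin 2) (Fin 2) ℝ)⁻¹ *ᵥ ![y₁, y₂])) / 2) := by
    rw [hdet, hQ]
    have hD : (0:ℝ) < l₁ * l₂ * (1 - l₁ - l₂) := by positivity
    have hsq : 0 < Real.sqrt (l₁ * l₂ * (1 - l₁ - l₂)) := Real.sqrt_pos.mpr hD
    have hlogsqrt : Real.log (Real.sqrt (l₁ * l₂ * (1 - l₁ - l₂)))
        = (Real.log l₁ + Real.log l₂ + Real.log (1 - l₁ - l₂)) / 2 := by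
      rw [Real.log_sqrt hD.le,
        Real.log_mul (by positivity) (ne_of_gt hl₃),
        Real.log_mul (ne_of_gt hl₁) (ne_of_gt hl₂)]
    rw [show (Real.log (2 * Real.pi) / 2 - Real.log (2 * Real.pi) / 2
          - Real.log (2 * Real.pi) / 2 - Real.log (2 * Real.pi) / 2)
        + (Real.log l₁ + Real.log l₂ + Real.log (1 - l₁ - l₂)) / 2
        + ((-(y₁ ^ 2) / (2 * l₁) - Real.log l₁ + (-(y₂ ^ 2) / (2 * l₂) - Real.log l₂))
          + (-((-(y₁ + y₂)) ^ 2) / (2 * (1 - l₁ - l₂)) - Real.log (1 - l₁ - l₂)))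
        = -(Real.log (2 * Real.pi) + Real.log (Real.sqrt (l₁ * l₂ * (1 - l₁ - l₂))))
          + -(y₁ ^ 2 / l₁ + y₂ ^ 2 / l₂ + (y₁ + y₂) ^ 2 / (1 - l₁ - l₂)) / 2 by
      rw [hlogsqrt]; field_simp; ring]
    rw [Real.exp_add, Real.exp_neg, Real.exp_add,
      Real.exp_log (by positivity : (0:ℝ) < 2 * Real.pi), Real.exp_log hsq]
    rw [one_div]
  rw [← hval]
  exact ((Real.continuous_exp.tendsto _).comp hg).congr' hmain
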